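/- Given a 3-SAT formula C = ⋀_{i=1}^{m} C_i over variables X where each clause C_i has literals ℓ_i^1, ℓ_i^2, ℓ_i^3, construct the Multistage 2-SAT instance over X' = X ∪ {b_1,b_2,b_3} with 2m stages, where for each i the stage 2i−1 has formula C_{¬B} = (¬b_1 ∨ ¬b_2) ∧ (¬b_1 ∨ ¬b_3) ∧ (¬b_2 ∨ ¬b_3) and stage 2i has formula (ℓ_i^1 ∨ b_1) ∧ (ℓ_i^2 ∨ b_2) ∧ (ℓ_i^3 ∨ b_3) ∧ (b_1 ∨ b_2) ∧ (b_1 ∨ b_3) ∧ (b_2 ∨ b_3), and d = 1. Then C is satisfiable if and only if the constructed Multistage 2-SAT instance is a yes-instance. -/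

import Mathlib

/-- A CNF formula: a list of clauses, each clause a list of literals `(variable, sign)`. -/
abbrev CNF (V : Type) := List (List (V × Bool))

/-- `f` satisfies the CNF `C`: every clause contains a literal evaluating to true. -/
def SatCNF {V : Type} (f : V → Bool) (C : CNF V) : Prop :=
  ∀ cl ∈ C, ∃ l ∈ cl, f l.1 = l.2

/-- Hamming distance between two truth assignments. -/
def hdiff {V : Type} [Fintype V] (f g : V → Bool) : ℕ :=
  (Finset.univ.filter fun x => f x ≠ g x).card

/-- Yes-instance of Multistage SAT, stages given as a list of CNF formulas. -/
def MSatYes {V : Type} [Fintype V] (Φ : List (CNF V)) (d : ℕ) : Prop :=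
  ∃ f : Fin Φ.length → V → Bool,
    (∀ i, SatCNF (f i) (Φ.get i)) ∧
    ∀ (i : ℕ) (h : i + 1 < Φ.length),
      hdiff (f ⟨i, Nat.lt_of_succ_lt h⟩) (f ⟨i + 1, h⟩) ≤ d

/-- Yes-instance of Multistage SAT, stages given as a function `Fin τ → CNF V`. -/
def MSatYesF {V : Type} [Fintype V] (τ : ℕ) (Φ : Fin τ → CNF V) (d : ℕ) : Prop :=
  ∃ f : Fin τ → V → Bool,
    (∀ i, SatCNF (f i) (Φ i)) ∧
    ∀ (i : ℕ) (h : i + 1 < τ),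
      hdiff (f ⟨i, Nat.lt_of_succ_lt h⟩) (f ⟨i + 1, h⟩) ≤ d

/-- A 2-CNF: every clause has at most two literals. -/
def Is2CNF {V : Type} (C : CNF V) : Prop := ∀ cl ∈ C, cl.length ≤ 2

/-- The formula $C_B$ over $X ∪ \{b_1,b_2,b_3\}$. -/
def CBs (V : Type) : CNF (V ⊕ Fin 3) :=
  [[(Sum.inr 0, true), (Sum.inr 1, true)], [(Sum.inr 0, true), (Sum.inr 2, true)],
   [(Sum.inr 1, true), (Sum.inr 2, true)]]

/-- The formula $C_{\neg B}$ over $X ∪ \{b_1,b_2,b_3\}$. -/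
def CnBs (V : Type) : CNF (V ⊕ Fin 3) :=
  [[(Sum.inr 0, false), (Sum.inr 1, false)], [(Sum.inr 0, false), (Sum.inr 2, false)],
   [(Sum.inr 1, false), (Sum.inr 2, false)]]

/-- The stages of the Multistage 2-SAT instance constructed from a 3-SAT instance with
clauses `L i` (each consisting of the three literals `L i 0, L i 1, L i 2`):
stage `2i-1` (index `2i-2` from zero, i.e. even index) is $C_{\neg B}$, and stage `2i`
(odd index from zero) is $(ℓ_i^1 ∨ b_1) ∧ (ℓ_i^2 ∨ b_2) ∧ (ℓ_i^3 ∨ b_3) ∧ C_B$. -/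
def threeSatStage (V : Type) (m : ℕ) (L : Fin m → Fin 3 → V × Bool)
    (j : Fin (2 * m)) : CNF (V ⊕ Fin 3) :=
  if j.val % 2 = 0 then CnBs V
  else
    (List.ofFn fun r : Fin 3 =>
      [(Sum.inl (L ⟨j.val / 2, by have := j.isLt; omega⟩ r).1,
        (L ⟨j.val / 2, by have := j.isLt; omega⟩ r).2), (Sum.inr r, true)]) ++ CBs V

def myOther (a b : Fin 3) : Fin 3 := if 0 ≠ a ∧ 0 ≠ b then 0 else if 1 ≠ a ∧ 1 ≠ b then 1 else 2

lemma myOther_ne : ∀ a b : Fin 3, myOther a b ≠ a ∧ myOther a b ≠ b := by decide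

abbrev atMostOne (b : Fin 3 → Bool) : Prop :=
  (b 0 = false ∨ b 1 = false) ∧ (b 0 = false ∨ b 2 = false) ∧ (b 1 = false ∨ b 2 = false)

abbrev atLeastTwo (b : Fin 3 → Bool) : Prop :=
  (b 0 = true ∨ b 1 = true) ∧ (b 0 = true ∨ b 2 = true) ∧ (b 1 = true ∨ b 2 = true)

lemma amo_of_sat {V : Type} (g : V ⊕ Fin 3 → Bool) (h : SatCNF g (CnBs V)) :
    atMostOne (fun k => g (Sum.inr k)) := by
  have h1 := h [(Sum.inr 0, false), (Sum.inr 1, false)] (by simp [CnBs])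
  have h2 := h [(Sum.inr 0, false), (Sum.inr 2, false)] (by simp [CnBs])
  have h3 := h [(Sum.inr 1, false), (Sum.inr 2, false)] (by simp [CnBs])
  simp at h1 h2 h3
  exact ⟨h1, h2, h3⟩

lemma alt_of_sat {V : Type} (g : V ⊕ Fin 3 → Bool) (h : SatCNF g (CBs V)) :
    atLeastTwo (fun k => g (Sum.inr k)) := by
  have h1 := h [(Sum.inr 0, true), (Sum.inr 1, true)] (by simp [CBs])
  have h2 := h [(Sum.inr 0, true), (Sum.inr 2, true)] (by simp [CBs])
  have h3 := h [(Sum.inr 1, true), (Sum.inr 2, true)] (by simp [CBs])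
  simp at h1 h2 h3
  exact ⟨h1, h2, h3⟩

lemma key_decide : ∀ bE bO : Fin 3 → Bool, atMostOne bE →
    (∀ k k' : Fin 3, k ≠ k' → bE k ≠ bO k → bE k' = bO k') → ∃ r, bO r = false := by decide

lemma amo_alt_false : ∀ b : Fin 3 → Bool, atMostOne b → atLeastTwo b → False := by decide

lemma diff_unique : ∀ s t k k' : Fin 3, s ≠ t →
    decide (k = s) ≠ decide (k ≠ t) → decide (k' = s) ≠ decide (k' ≠ t) → k = k' := by decide

lemma hdiff_pair {W : Type} [Fintype W] {g1 g2 : W → Bool} (h : hdiff g1 g2 ≤ 1) {x y : W}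
    (hxy : x ≠ y) (hx : g1 x ≠ g2 x) : g1 y = g2 y := by
  by_contra hy
  have h2 : 1 < (Finset.univ.filter fun z => g1 z ≠ g2 z).card :=
    Finset.one_lt_card.2 ⟨x, by simp [hx], y, by simp [hy], hxy⟩
  unfold hdiff at h
  omega

lemma satCnBs_of {V : Type} (g : V ⊕ Fin 3 → Bool) (s : Fin 3)
    (hg : ∀ k, g (Sum.inr k) = decide (k = s)) : SatCNF g (CnBs V) := by
  intro cl hcl
  simp [CnBs] at hcl
  rcases hcl with rfl | rfl | rfl <;> fin_cases s <;> simp [hg]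

lemma satCBs_of {V : Type} (g : V ⊕ Fin 3 → Bool) (t : Fin 3)
    (hg : ∀ k, g (Sum.inr k) = decide (k ≠ t)) : SatCNF g (CBs V) := by
  intro cl hcl
  simp [CBs] at hcl
  rcases hcl with rfl | rfl | rfl <;> fin_cases t <;> simp [hg]

/-- The assignment used in the forward direction. -/
def fwdAsg {V : Type} {m : ℕ} (f : V → Bool) (r : Fin m → Fin 3) (j : Fin (2 * m)) :
    V ⊕ Fin 3 → Bool
  | Sum.inl v => f v
  | Sum.inr k =>
      if j.val % 2 = 0 then
        decide (k = myOther (r ⟨(j.val - 1) / 2, by have := j.isLt; omega⟩)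
          (r ⟨j.val / 2, by have := j.isLt; omega⟩))
      else decide (k ≠ r ⟨j.val / 2, by have := j.isLt; omega⟩)

theorem threeSat_reduction_correct {V : Type} [Fintype V] (m : ℕ)
    (L : Fin m → Fin 3 → V × Bool) :
    (∃ f : V → Bool, ∀ i : Fin m, ∃ r : Fin 3, f (L i r).1 = (L i r).2) ↔
    MSatYesF (2 * m) (threeSatStage V m L) 1 := by
  constructor
  · rintro ⟨f, hf⟩
    choose r hr using hf
    refine ⟨fwdAsg f r, ?_, ?_⟩
    · intro j
      by_cases hp : j.val % 2 = 0
      · rw [threeSatStage, if_pos hp]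
        apply satCnBs_of _ (myOther (r ⟨((j : ℕ) - 1) / 2, by have := j.isLt; omega⟩)
          (r ⟨(j : ℕ) / 2, by have := j.isLt; omega⟩))
        intro k
        simp [fwdAsg, hp]
      · rw [threeSatStage, if_neg hp]
        intro cl hcl
        rcases List.mem_append.1 hcl with hcl | hcl
        · rcases List.mem_ofFn.1 hcl with ⟨r', rfl⟩
          by_cases hrr : r' = r ⟨j.val / 2, by have := j.isLt; omega⟩
          · exact ⟨_, List.mem_cons_self, by simp [fwdAsg, hrr]; exact hr _⟩
          · refine ⟨(Sum.inr r', true), by simp, ?_⟩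
            simp [fwdAsg, hp, hrr]
        · refine satCBs_of _ (r ⟨(j : ℕ) / 2, by have := j.isLt; omega⟩) ?_ cl hcl
          intro k
          simp [fwdAsg, hp]
    · intro i h
      rw [hdiff, Finset.card_le_one]
      intro a ha b hb
      simp only [Finset.mem_filter, Finset.mem_univ, true_and] at ha hb
      match a, b with
      | Sum.inl v, _ => exact (ha rfl).elim
      | _, Sum.inl v => exact (hb rfl).elim
      | Sum.inr k, Sum.inr k' =>
        simp only [fwdAsg] at ha hb
        by_cases hp : i % 2 = 0
        · have hp1 : ¬ (i + 1) % 2 = 0 := by omega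
          have e1 : (i + 1) / 2 = i / 2 := by omega
          simp only [hp, hp1, e1, if_pos, if_neg, if_true, if_false, reduceIte] at ha hb
          have hne := (myOther_ne (r ⟨(i - 1) / 2, by omega⟩) (r ⟨i / 2, by omega⟩)).2
          exact congrArg Sum.inr (diff_unique _ _ k k' hne ha hb)
        · have hp1 : (i + 1) % 2 = 0 := by omega
          have e1 : (i + 1 - 1) / 2 = i / 2 := by omega
          simp only [hp, hp1, e1, if_pos, if_neg, if_true, if_false, reduceIte] at ha hb
          have hne := (myOther_ne (r ⟨i / 2, by omega⟩) (r ⟨(i + 1) / 2, by omega⟩)).1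
          exact congrArg Sum.inr (diff_unique _ _ k k' hne (Ne.symm ha) (Ne.symm hb))
  · rintro ⟨g, hsat, hstep⟩
    rcases Nat.eq_zero_or_pos m with rfl | hm
    · exact ⟨fun _ => true, fun i => i.elim0⟩
    have h0 : 0 < 2 * m := by omega
    -- consecutive stages differ on some b-variable
    have bdiff : ∀ (j : ℕ) (h : j + 1 < 2 * m),
        ∃ k : Fin 3, g ⟨j, by omega⟩ (Sum.inr k) ≠ g ⟨j + 1, h⟩ (Sum.inr k) := by
      intro j h
      by_contra hc
      push_neg at hc
      by_cases hp : j % 2 = 0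
      · have hE := hsat ⟨j, by omega⟩
        rw [threeSatStage, if_pos hp] at hE
        have hO := hsat ⟨j + 1, h⟩
        rw [threeSatStage, if_neg (by simpa using by omega : ¬ ((⟨j+1,h⟩ : Fin (2*m)).val % 2 = 0))] at hO
        have hO' : SatCNF (g ⟨j + 1, h⟩) (CBs V) :=
          fun cl hcl => hO cl (List.mem_append.2 (Or.inr hcl))
        have amo := amo_of_sat _ hE
        have alt := alt_of_sat _ hO'
        simp only [hc] at amo
        exact amo_alt_false _ amo alt
      · have hE := hsat ⟨j + 1, h⟩
        rw [threeSatStage, if_pos (by simpa using by omega : ((⟨j+1,h⟩ : Fin (2*m)).val % 2 = 0))] at hE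
        have hO := hsat ⟨j, by omega⟩
        rw [threeSatStage, if_neg hp] at hO
        have hO' : SatCNF (g ⟨j, by omega⟩) (CBs V) :=
          fun cl hcl => hO cl (List.mem_append.2 (Or.inr hcl))
        have amo := amo_of_sat _ hE
        have alt := alt_of_sat _ hO'
        simp only [← hc] at amo
        exact amo_alt_false _ amo alt
    -- the V-part never changes
    have const : ∀ (j : ℕ) (h : j < 2 * m) (v : V),
        g ⟨j, h⟩ (Sum.inl v) = g ⟨0, h0⟩ (Sum.inl v) := by
      intro j
      induction j with
      | zero => intro h v; rfl
      | succ n ih =>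
        intro h v
        have hn : n < 2 * m := by omega
        obtain ⟨k, hk⟩ := bdiff n h
        have := hdiff_pair (hstep n h) (x := Sum.inr k) (y := Sum.inl v) (by simp) hk
        rw [← this]
        exact ih hn v
    refine ⟨fun v => g ⟨0, h0⟩ (Sum.inl v), ?_⟩
    intro i
    have hjO : 2 * i.val + 1 < 2 * m := by have := i.isLt; omega
    have hE := hsat ⟨2 * i.val, by omega⟩
    rw [threeSatStage, if_pos (Nat.mul_mod_right 2 i.val : (2 * i.val) % 2 = 0)] at hE
    have amo := amo_of_sat _ hE
    have hd := hstep (2 * i.val) hjO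
    have hcompat : ∀ k k' : Fin 3, k ≠ k' →
        g ⟨2 * i.val, by omega⟩ (Sum.inr k) ≠ g ⟨2 * i.val + 1, hjO⟩ (Sum.inr k) →
        g ⟨2 * i.val, by omega⟩ (Sum.inr k') = g ⟨2 * i.val + 1, hjO⟩ (Sum.inr k') := by
      intro k k' hkk hne
      exact hdiff_pair hd (by simp [hkk]) hne
    obtain ⟨rr, hrr⟩ := key_decide _ _ amo hcompat
    have hO := hsat ⟨2 * i.val + 1, hjO⟩
    rw [threeSatStage, if_neg (by omega : ¬ (2 * i.val + 1) % 2 = 0)] at hO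
    have hmem := hO _ (List.mem_append.2 (Or.inl (List.mem_ofFn.2 ⟨rr, rfl⟩)))
    simp only [show (2 * i.val + 1) / 2 = i.val from by omega, Fin.eta] at hmem
    simp at hmem
    rcases hmem with hmem | hmem
    · rw [const (2 * i.val + 1) hjO] at hmem
      exact ⟨rr, hmem⟩
    · exact absurd hmem (by simp [hrr])
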